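/- Let I = I_{[a_1,...,a_r]} be a cf-ary interval and b = (b_1,...,b_k) a block of positive integers. Assume the unconditioned large deviation bound: for all n and δ > 0, μ({x ∈ (0,1) : |(1/n) Σ_{i=0}^{n−1} 𝟙_{I_b}(T^i x) − μ(I_b)| > δ}) ≤ 2 M e^{−δ² n/(2M)}, where M = min{m ∈ ℕ : (log 2)·2^{−m+k} ≤ δ²/2}. Then the Lebesgue measure of the set of x ∈ I such that |(1/n) Σ_{i=0}^{n−1} 𝟙_{I_b}(T^{r+i} x) − μ(I_b)| > δ is at most 6 M e^{−δ² n/(2M)} · |I|. -/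

import Mathlib

open MeasureTheory
open scoped ENNReal NNReal

/-- The continuant of a finite list of partial quotients: for `[a₁,...,aₙ]` it equals `qₙ`,
where `q₋₁ = 0`, `q₀ = 1`, `qₙ = aₙ qₙ₋₁ + qₙ₋₂`. -/
def contK : List ℕ → ℕ
  | [] => 1
  | [a] => a
  | a :: b :: l => a * contK (b :: l) + contK l

/-- The value of the finite continued fraction `[a₁,...,aₙ] = 1/(a₁ + 1/(a₂ + ⋯ + 1/aₙ))`. -/
noncomputable def cfVal : List ℕ → ℝ
  | [] => 0
  | a :: l => 1 / (a + cfVal l)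

/-- The list with its last entry incremented by one. -/
def succLast : List ℕ → List ℕ
  | [] => []
  | [a] => [a + 1]
  | a :: b :: l => a :: succLast (b :: l)

/-- The cf-ary interval `I_{[a₁,...,aₙ]}`: the open interval with endpoints
`[a₁,...,aₙ]` and `[a₁,...,aₙ+1]`, i.e. the set of numbers whose continued fraction
expansion begins with `a₁,...,aₙ`. -/
noncomputable def cfInterval (u : List ℕ) : Set ℝ :=
  Set.Ioo (min (cfVal u) (cfVal (succLast u))) (max (cfVal u) (cfVal (succLast u)))

/-- The Gauss measure of a set: `μ(A) = (1/log 2) ∫_A dx/(1+x)`. -/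
noncomputable def gaussM (A : Set ℝ) : ℝ := (1 / Real.log 2) * ∫ x in A, 1 / (1 + x)

/-- The Gauss map `T(x) = 1/x - ⌊1/x⌋`, with `T(0) = 0`. -/
noncomputable def gaussMap (x : ℝ) : ℝ := if x = 0 then 0 else 1 / x - ⌊1 / x⌋

/-- `M(δ,k) = min { m ∈ ℕ : (log 2)·2^{-m+k} ≤ δ²/2 }`. -/
noncomputable def Mconst (δ : ℝ) (k : ℕ) : ℕ :=
  sInf {m : ℕ | Real.log 2 * (2 : ℝ) ^ ((k : ℤ) - (m : ℤ)) ≤ δ ^ 2 / 2}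

lemma measurable_gaussMap : Measurable gaussMap := by
  unfold gaussMap
  have h1 : Measurable fun x : ℝ => 1 / x := measurable_const.div measurable_id
  have h2 : Measurable fun x : ℝ => ((⌊1 / x⌋ : ℤ) : ℝ) :=
    measurable_from_top.comp h1.floor
  exact Measurable.ite (by simp [Set.setOf_eq_eq_singleton]) measurable_const (h1.sub h2)

lemma gaussMap_inv (a : ℕ) (ha : 0 < a) {t : ℝ} (ht : t ∈ Set.Ioo (0:ℝ) 1) :
    gaussMap (1 / ((a:ℝ) + t)) = t := by
  obtain ⟨ht0, ht1⟩ := ht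
  have ha1 : (1:ℝ) ≤ a := by exact_mod_cast ha
  have hpos : (0:ℝ) < (a:ℝ) + t := by linarith
  have hne : (1:ℝ) / ((a:ℝ) + t) ≠ 0 := by positivity
  rw [gaussMap, if_neg hne, one_div_one_div]
  have hfl : ⌊(a:ℝ) + t⌋ = a := by
    rw [add_comm, Int.floor_add_natCast, Int.floor_eq_zero_iff.2 ⟨ht0.le, ht1⟩]
    simp
  rw [hfl]; push_cast; ring

lemma cf_key : ∀ u : List ℕ, u ≠ [] → (∀ x ∈ u, 0 < x) →
    ∃ P P' Q Q' : ℕ,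
      1 ≤ P ∧ P ≤ Q ∧ P' ≤ Q' ∧ Q' ≤ Q ∧ P' ≤ P ∧
      ((P:ℤ) * Q' - P' * Q = 1 ∨ (P:ℤ) * Q' - P' * Q = -1) ∧
      cfVal u = P / Q ∧
      cfVal (succLast u) = ((P:ℝ) + P') / ((Q:ℝ) + Q') ∧
      ∀ y ∈ Set.Ioo (0:ℝ) 1,
        ((P:ℝ) + P' * y) / ((Q:ℝ) + Q' * y) ∈ Set.Ioo (0:ℝ) 1 ∧
        gaussMap^[u.length] (((P:ℝ) + P' * y) / ((Q:ℝ) + Q' * y)) = y := by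
  intro u
  induction u with
  | nil => intro h; exact absurd rfl h
  | cons a l ih =>
    intro _ hpos
    have ha : 0 < a := hpos a List.mem_cons_self
    have haR : (1:ℝ) ≤ a := by exact_mod_cast ha
    cases l with
    | nil =>
      refine ⟨1, 0, a, 1, le_refl 1, ha, Nat.zero_le 1, ha, Nat.zero_le 1,
        Or.inl (by push_cast; ring), ?_, ?_, ?_⟩
      · simp [cfVal]
      · simp only [succLast, cfVal]
        push_cast; norm_num
      · intro y hy
        obtain ⟨hy0, hy1⟩ := hy
        have hval : (((1:ℕ):ℝ) + ((0:ℕ):ℝ) * y) / (((a:ℕ):ℝ) + ((1:ℕ):ℝ) * y)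
            = 1 / ((a:ℝ) + y) := by push_cast; ring_nf
        rw [hval]
        have hd : (0:ℝ) < (a:ℝ) + y := by linarith
        have hlt : 1 / ((a:ℝ) + y) < 1 := by
          rw [div_lt_one hd]; linarith
        have hgt : 0 < 1 / ((a:ℝ) + y) := by positivity
        refine ⟨⟨hgt, hlt⟩, ?_⟩
        simp only [List.length_singleton, Function.iterate_one]
        exact gaussMap_inv a ha ⟨hy0, hy1⟩
    | cons b l' =>
      obtain ⟨P, P', Q, Q', h1, h2, h3, h4, h5, hdet, hv, hw, hmem⟩ :=
        ih (by simp) (fun x hx => hpos x (List.mem_cons_of_mem a hx))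
      have hQ1 : 1 ≤ Q := h1.trans h2
      have hQR : (1:ℝ) ≤ Q := by exact_mod_cast hQ1
      have hQ'R : (0:ℝ) ≤ Q' := by positivity
      have hPR : (1:ℝ) ≤ P := by exact_mod_cast h1
      have hP'R : (0:ℝ) ≤ P' := by positivity
      refine ⟨Q, Q', a * Q + P, a * Q' + P', hQ1, ?_, ?_, ?_, h4, ?_, ?_, ?_, ?_⟩
      · calc Q = 1 * Q := (one_mul Q).symm
          _ ≤ a * Q := Nat.mul_le_mul_right Q ha
          _ ≤ a * Q + P := Nat.le_add_right _ _
      · calc Q' = 1 * Q' := (one_mul Q').symm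
          _ ≤ a * Q' := Nat.mul_le_mul_right Q' ha
          _ ≤ a * Q' + P' := Nat.le_add_right _ _
      · exact Nat.add_le_add (Nat.mul_le_mul_left a h4) h5
      · rcases hdet with h | h
        · right; push_cast; linear_combination (-1 : ℤ) * h
        · left; push_cast; linear_combination (-1 : ℤ) * h
      · -- cfVal (a :: b :: l') = Q / (a*Q+P)
        show 1 / ((a:ℝ) + cfVal (b :: l')) = _
        rw [hv]
        have e1 : (Q:ℝ) ≠ 0 := by positivity
        have e2 : ((a:ℝ) + (P:ℝ)/(Q:ℝ)) ≠ 0 := by positivity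
        push_cast
        field_simp
      · -- succLast
        show cfVal (a :: succLast (b :: l')) = _
        show 1 / ((a:ℝ) + cfVal (succLast (b :: l'))) = _
        rw [hw]
        have e1 : ((Q:ℝ) + (Q':ℝ)) ≠ 0 := by positivity
        have e2 : ((a:ℝ) + ((P:ℝ)+(P':ℝ))/((Q:ℝ)+(Q':ℝ))) ≠ 0 := by positivity
        have e3 : ((a:ℝ) * Q + P + ((a:ℝ) * Q' + P')) ≠ 0 := by positivity
        push_cast
        rw [div_eq_div_iff e2 e3]
        field_simp
        ring
      · intro y hy
        obtain ⟨hy0, hy1⟩ := hy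
        obtain ⟨⟨ht0, ht1⟩, hiter⟩ := hmem y ⟨hy0, hy1⟩
        set t : ℝ := ((P:ℝ) + P' * y) / ((Q:ℝ) + Q' * y) with htdef
        have hDy : (0:ℝ) < (Q:ℝ) + Q' * y := by positivity
        have hat : (0:ℝ) < (a:ℝ) + t := by linarith
        have hkey : (((a*Q+P : ℕ):ℝ) + ((a*Q'+P' : ℕ):ℝ) * y) = ((a:ℝ) + t) * ((Q:ℝ) + Q' * y) := by
          push_cast
          rw [htdef]
          field_simp
          ring
        have hval : (((Q:ℕ):ℝ) + ((Q':ℕ):ℝ) * y) / (((a*Q+P : ℕ):ℝ) + ((a*Q'+P' : ℕ):ℝ) * y)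
            = 1 / ((a:ℝ) + t) := by
          rw [hkey, eq_div_iff hat.ne']
          field_simp
        rw [hval]
        have hlt : 1 / ((a:ℝ) + t) < 1 := by
          rw [div_lt_one hat]; linarith
        have hgt : 0 < 1 / ((a:ℝ) + t) := by positivity
        refine ⟨⟨hgt, hlt⟩, ?_⟩
        have hlen : (a :: b :: l').length = (b :: l').length + 1 := rfl
        rw [hlen, Function.iterate_succ_apply, gaussMap_inv a ha ⟨ht0, ht1⟩, hiter]


lemma arith_final {L ME q q' : ℝ} (hL : L < 0.7) (hL0 : 0 < L) (hME : 0 ≤ ME)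
    (hq : 1 ≤ q) (hq' : 0 ≤ q') (hq'q : q' ≤ q) :
    2 * L * (2 * ME) * (q * (q + q')) ≤ 6 * ME * q ^ 2 := by
  nlinarith [mul_nonneg hME (sq_nonneg q), mul_nonneg hME (mul_nonneg (by linarith : (0:ℝ) ≤ q) hq'),
    mul_nonneg (mul_nonneg hME (by linarith : (0:ℝ) ≤ q)) (sub_nonneg.2 hq'q),
    mul_nonneg (mul_nonneg (sub_nonneg.2 hL.le) hME) (mul_nonneg (by linarith : (0:ℝ) ≤ q) (by linarith : (0:ℝ) ≤ q + q'))]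

set_option maxHeartbeats 2000000 in
theorem conditional_large_deviations (a b : List ℕ)
    (ha : ∀ x ∈ a, 0 < x) (hb : ∀ x ∈ b, 0 < x) (han : a ≠ []) (hbn : b ≠ [])
    (δ : ℝ) (hδ : 0 < δ) (n : ℕ) (hn : 1 ≤ n)
    (H : ∀ m : ℕ, ∀ η : ℝ, 0 < η →
      gaussM {x ∈ Set.Ioo (0 : ℝ) 1 |
          η < |(∑ i ∈ Finset.range m,
              Set.indicator (cfInterval b) (fun _ => (1 : ℝ)) (gaussMap^[i] x)) / (m : ℝ)
            - gaussM (cfInterval b)|}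
        ≤ 2 * (Mconst η b.length : ℝ) *
            Real.exp (-(η ^ 2 * (m : ℝ)) / (2 * (Mconst η b.length : ℝ)))) :
    (volume {x ∈ cfInterval a |
        δ < |(∑ i ∈ Finset.range n,
            Set.indicator (cfInterval b) (fun _ => (1 : ℝ)) (gaussMap^[a.length + i] x)) / (n : ℝ)
          - gaussM (cfInterval b)|}).toReal
      ≤ 6 * (Mconst δ b.length : ℝ) *
          Real.exp (-(δ ^ 2 * (n : ℝ)) / (2 * (Mconst δ b.length : ℝ))) *
          (volume (cfInterval a)).toReal := by
  classical
  obtain ⟨P, P', Q, Q', hP1, hPQ, hP'Q', hQ'Q, hP'P, hdet, hv, hw, hmob⟩ := cf_key a han ha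
  have hQR : (1:ℝ) ≤ (Q:ℝ) := by exact_mod_cast hP1.trans hPQ
  have hQpos : (0:ℝ) < (Q:ℝ) := by linarith
  have hQ'R : (0:ℝ) ≤ (Q':ℝ) := by positivity
  have hQ'Qr : (Q':ℝ) ≤ (Q:ℝ) := by exact_mod_cast hQ'Q
  set ψ : ℝ → ℝ := fun y => ((P:ℝ) + (P':ℝ) * y) / ((Q:ℝ) + (Q':ℝ) * y) with hψdef
  set d : ℝ := (P':ℝ) * (Q:ℝ) - (P:ℝ) * (Q':ℝ) with hddef
  have habs : |d| = 1 := by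
    rcases hdet with h | h
    · have h' : (P:ℝ) * (Q':ℝ) - (P':ℝ) * (Q:ℝ) = 1 := by exact_mod_cast h
      have : d = -1 := by rw [hddef]; linarith
      rw [this]; norm_num
    · have h' : (P:ℝ) * (Q':ℝ) - (P':ℝ) * (Q:ℝ) = -1 := by exact_mod_cast h
      have : d = 1 := by rw [hddef]; linarith
      rw [this]; norm_num
  have hDpos : ∀ y : ℝ, 0 ≤ y → 0 < (Q:ℝ) + (Q':ℝ) * y := by
    intro y hy
    have : 0 ≤ (Q':ℝ) * y := mul_nonneg hQ'R hy
    linarith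
  have hdiff : ∀ y z : ℝ, 0 ≤ y → 0 ≤ z →
      ψ y - ψ z = d * (y - z) / (((Q:ℝ) + (Q':ℝ) * y) * ((Q:ℝ) + (Q':ℝ) * z)) := by
    intro y z hy hz
    have h1 := hDpos y hy
    have h2 := hDpos z hz
    rw [hψdef, hddef]
    field_simp
    ring
  have hψ0 : ψ 0 = (P:ℝ) / (Q:ℝ) := by rw [hψdef]; norm_num
  have hψ1 : ψ 1 = ((P:ℝ) + (P':ℝ)) / ((Q:ℝ) + (Q':ℝ)) := by rw [hψdef]; norm_num
  have hIa : cfInterval a = Set.Ioo (min (ψ 0) (ψ 1)) (max (ψ 0) (ψ 1)) := by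
    rw [cfInterval, hv, hw, hψ0, hψ1]
  have hQQ'pos : (0:ℝ) < (Q:ℝ) * ((Q:ℝ) + (Q':ℝ)) := by nlinarith
  have hgap : |ψ 0 - ψ 1| = 1 / ((Q:ℝ) * ((Q:ℝ) + (Q':ℝ))) := by
    have h01 := hdiff 0 1 le_rfl zero_le_one
    rw [h01, abs_div, abs_mul, habs, one_mul]
    rw [abs_of_pos (by nlinarith : (0:ℝ) < ((Q:ℝ) + (Q':ℝ) * 0) * ((Q:ℝ) + (Q':ℝ) * 1))]
    norm_num
  have hvol : (volume (cfInterval a)).toReal = 1 / ((Q:ℝ) * ((Q:ℝ) + (Q':ℝ))) := by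
    rw [hIa, Real.volume_Ioo, ENNReal.toReal_ofReal (by linarith [min_le_max (a := ψ 0) (b := ψ 1)])]
    rw [max_sub_min_eq_abs, abs_sub_comm, hgap]
  have hcont : ContinuousOn ψ (Set.Icc (0:ℝ) 1) := by
    rw [hψdef]
    apply ContinuousOn.div (by fun_prop) (by fun_prop)
    intro y hy
    exact (hDpos y hy.1).ne'
  have himg : cfInterval a ⊆ ψ '' Set.Ioo 0 1 := by
    rw [hIa]
    rcases le_total (ψ 0) (ψ 1) with hle | hle
    · rw [min_eq_left hle, max_eq_right hle]
      exact intermediate_value_Ioo zero_le_one hcont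
    · rw [min_eq_right hle, max_eq_left hle]
      exact intermediate_value_Ioo' zero_le_one hcont
  set K : ℝ≥0 := Real.toNNReal (1 / (Q:ℝ)^2) with hKdef
  have hKco : (K:ℝ) = 1 / (Q:ℝ)^2 := Real.coe_toNNReal _ (by positivity)
  have hlip : LipschitzOnWith K ψ (Set.Ioo 0 1) := by
    apply LipschitzOnWith.of_dist_le_mul
    intro x hx y hy
    rw [Real.dist_eq, Real.dist_eq, hKco]
    have hx0 := hx.1.le
    have hy0 := hy.1.le
    have hDx := hDpos x hx0
    have hDy := hDpos y hy0
    rw [hdiff x y hx0 hy0, abs_div, abs_mul, habs, one_mul,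
      abs_of_pos (mul_pos hDx hDy)]
    calc |x - y| / (((Q:ℝ) + (Q':ℝ) * x) * ((Q:ℝ) + (Q':ℝ) * y))
        ≤ |x - y| / ((Q:ℝ)^2) := by
          apply div_le_div_of_nonneg_left (abs_nonneg _) (by positivity)
          nlinarith [mul_nonneg hQ'R hx0, mul_nonneg hQ'R hy0]
      _ = 1 / (Q:ℝ)^2 * |x - y| := by ring
  -- the deviation set on (0,1)
  set F : ℝ → ℝ := fun y => (∑ i ∈ Finset.range n,
      Set.indicator (cfInterval b) (fun _ => (1 : ℝ)) (gaussMap^[i] y)) / (n : ℝ)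
      - gaussM (cfInterval b) with hFdef
  set S : Set ℝ := {y ∈ Set.Ioo (0:ℝ) 1 | δ < |F y|} with hSdef
  have hSsub : S ⊆ Set.Ioo 0 1 := fun y hy => hy.1
  -- the conditional set is contained in ψ '' S
  have hsub : {x ∈ cfInterval a |
      δ < |(∑ i ∈ Finset.range n,
          Set.indicator (cfInterval b) (fun _ => (1 : ℝ)) (gaussMap^[a.length + i] x)) / (n : ℝ)
        - gaussM (cfInterval b)|} ⊆ ψ '' S := by
    rintro x ⟨hxI, hxd⟩
    obtain ⟨y, hyIoo, hxy⟩ := himg hxI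
    have hit : gaussMap^[a.length] x = y := by
      rw [← hxy]
      exact (hmob y hyIoo).2
    refine ⟨y, ⟨hyIoo, ?_⟩, hxy⟩
    have he : ∀ i, gaussMap^[a.length + i] x = gaussMap^[i] y := by
      intro i
      rw [add_comm, Function.iterate_add_apply, hit]
    show δ < |F y|
    rw [hFdef]
    have hsum : (∑ i ∈ Finset.range n,
        Set.indicator (cfInterval b) (fun _ => (1 : ℝ)) (gaussMap^[i] y))
        = ∑ i ∈ Finset.range n,
        Set.indicator (cfInterval b) (fun _ => (1 : ℝ)) (gaussMap^[a.length + i] x) :=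
      Finset.sum_congr rfl (fun i _ => by rw [he i])
    simpa [hsum] using hxd
  -- measurability of S
  have hmsb : MeasurableSet (cfInterval b) := by
    rw [cfInterval]; exact measurableSet_Ioo
  have hmF : Measurable F := by
    rw [hFdef]
    apply Measurable.sub ?_ measurable_const
    apply Measurable.div ?_ measurable_const
    apply Finset.measurable_sum
    intro i _
    exact (measurable_const.indicator hmsb).comp (measurable_gaussMap.iterate i)
  have hS : MeasurableSet S :=
    measurableSet_Ioo.inter (measurableSet_lt measurable_const hmF.abs)
  -- volume of S vs Gauss measure
  have hvolS : volume S ≤ volume (Set.Ioo (0:ℝ) 1) := measure_mono hSsub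
  have hfin : volume S ≠ ⊤ := by
    refine ne_top_of_le_ne_top ?_ hvolS
    simp [Real.volume_Ioo]
  have hcont2 : ContinuousOn (fun x : ℝ => 1 / (1 + x)) (Set.Icc 0 1) := by
    apply ContinuousOn.div continuousOn_const (by fun_prop)
    intro x hx
    have := hx.1
    exact (by linarith : (0:ℝ) < 1 + x).ne'
  have hint : IntegrableOn (fun x : ℝ => 1 / (1 + x)) S volume :=
    (hcont2.integrableOn_Icc).mono_set (hSsub.trans Set.Ioo_subset_Icc_self)
  have hhalf : (volume S).toReal * (1/2) ≤ ∫ x in S, 1 / (1 + x) := by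
    have h0 : ∫ _ in S, (1/2 : ℝ) = (volume S).toReal * (1/2) := by
      rw [setIntegral_const, smul_eq_mul]
      rfl
    rw [← h0]
    apply setIntegral_mono_on (integrableOn_const hfin) hint hS
    intro x hx
    obtain ⟨hx0, hx1⟩ := hSsub hx
    rw [div_le_div_iff₀ (by norm_num) (by linarith)]
    linarith
  have hlog : (0:ℝ) < Real.log 2 := Real.log_pos one_lt_two
  have hSg : (volume S).toReal ≤ 2 * Real.log 2 * gaussM S := by
    rw [gaussM]
    have he : 2 * Real.log 2 * (1 / Real.log 2 * ∫ x in S, 1 / (1 + x))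
        = 2 * ∫ x in S, 1 / (1 + x) := by
      field_simp
    rw [he]
    linarith
  have hH : gaussM S ≤ 2 * (Mconst δ b.length : ℝ) *
      Real.exp (-(δ ^ 2 * (n : ℝ)) / (2 * (Mconst δ b.length : ℝ))) := H n δ hδ
  set M : ℝ := (Mconst δ b.length : ℝ) with hMdef
  set E : ℝ := Real.exp (-(δ ^ 2 * (n : ℝ)) / (2 * M)) with hEdef
  have hM0 : 0 ≤ M := by rw [hMdef]; positivity
  have hE0 : 0 < E := Real.exp_pos _
  -- measure of the image
  have himgle : volume (ψ '' S) ≤ (K : ℝ≥0∞) * volume S := by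
    have h := (hlip.mono hSsub).hausdorffMeasure_image_le (zero_le_one : (0:ℝ) ≤ 1)
    rw [hausdorffMeasure_real] at h
    simpa [ENNReal.rpow_one] using h
  have hME : (0:ℝ) ≤ M * E := mul_nonneg hM0 hE0.le
  have hKge : (0:ℝ) ≤ (K:ℝ) := K.coe_nonneg
  calc (volume {x ∈ cfInterval a |
        δ < |(∑ i ∈ Finset.range n,
            Set.indicator (cfInterval b) (fun _ => (1 : ℝ)) (gaussMap^[a.length + i] x)) / (n : ℝ)
          - gaussM (cfInterval b)|}).toReal
      ≤ ((K:ℝ≥0∞) * volume S).toReal :=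
        ENNReal.toReal_mono (ENNReal.mul_ne_top ENNReal.coe_ne_top hfin)
          ((measure_mono hsub).trans himgle)
    _ = (K:ℝ) * (volume S).toReal := by rw [ENNReal.toReal_mul, ENNReal.coe_toReal]
    _ ≤ (K:ℝ) * (2 * Real.log 2 * (2 * M * E)) := by
        have h1 : (volume S).toReal ≤ 2 * Real.log 2 * (2 * M * E) := by
          have h2 : 2 * Real.log 2 * gaussM S ≤ 2 * Real.log 2 * (2 * M * E) :=
            mul_le_mul_of_nonneg_left hH (by positivity)
          linarith [hSg]
        exact mul_le_mul_of_nonneg_left h1 hKge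
    _ ≤ 6 * M * E * (volume (cfInterval a)).toReal := by
        rw [hKco, hvol]
        have hL : Real.log 2 < 0.7 := lt_trans Real.log_two_lt_d9 (by norm_num)
        rw [one_div_mul_eq_div, mul_one_div, div_le_div_iff₀ (pow_pos hQpos 2) hQQ'pos]
        have := arith_final (ME := M * E) hL hlog hME hQR hQ'R hQ'Qr
        linarith [this]
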